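/- arXiv:1505.05532 — 3 statements merged into one kernel-verified Lean document; each statement's English description precedes it below -/
import Mathlib

section
/- Let A be a monoid in C, V an object of C, and ψ:V⊗A→A⊗V a morphism satisfying the measuring condition (μ_A⊗V)∘(A⊗ψ)∘(ψ⊗A)=ψ∘(V⊗μ_A). Then the morphism ∇_{A⊗V}=(μ_A⊗V)∘(A⊗ψ)∘(A⊗V⊗η_A):A⊗V→A⊗V is idempotent, i.e. ∇_{A⊗V}∘∇_{A⊗V}=∇_{A⊗V}. -/
open CategoryTheory MonoidalCategory

universe v u

namespace WeakCrossed

variable {C : Type u} [Category.{v} C] [MonoidalCategory C]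

/-- The monoid axioms for a triple `(A, η, μ)` in a monoidal category. -/
def IsMon (A : C) (eta : 𝟙_ C ⟶ A) (mu : A ⊗ A ⟶ A) : Prop :=
  (eta ▷ A) ≫ mu = (λ_ A).hom ∧ (A ◁ eta) ≫ mu = (ρ_ A).hom ∧
    (mu ▷ A) ≫ mu = (α_ A A A).hom ≫ (A ◁ mu) ≫ mu

/-- The morphism `(μ_A ⊗ Y) ∘ (A ⊗ f) : (A ⊗ X) ⊗ Z ⟶ A ⊗ Y` for `f : X ⊗ Z ⟶ A ⊗ Y`. -/
def phi (A : C) {X Z Y : C} (mu : A ⊗ A ⟶ A) (f : X ⊗ Z ⟶ A ⊗ Y) :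
    (A ⊗ X) ⊗ Z ⟶ A ⊗ Y :=
  (α_ A X Z).hom ≫ (A ◁ f) ≫ (α_ A A Y).inv ≫ (mu ▷ Y)

/-- The measuring condition `(μ_A ⊗ V) ∘ (A ⊗ ψ) ∘ (ψ ⊗ A) = ψ ∘ (V ⊗ μ_A)`. -/
def Measuring (A V : C) (mu : A ⊗ A ⟶ A) (psi : V ⊗ A ⟶ A ⊗ V) : Prop :=
  (psi ▷ A) ≫ phi A mu psi = (α_ V A A).hom ≫ (V ◁ mu) ≫ psi

/-- The idempotent `∇_{A⊗V} = (μ_A ⊗ V) ∘ (A ⊗ ψ) ∘ (A ⊗ V ⊗ η_A)`. -/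
def nabla (A V : C) (eta : 𝟙_ C ⟶ A) (mu : A ⊗ A ⟶ A) (psi : V ⊗ A ⟶ A ⊗ V) :
    A ⊗ V ⟶ A ⊗ V :=
  (ρ_ (A ⊗ V)).inv ≫ ((A ⊗ V) ◁ eta) ≫ phi A mu psi

/-- The twisted condition
`(μ_A ⊗ V) ∘ (A ⊗ ψ) ∘ (σ ⊗ A) = (μ_A ⊗ V) ∘ (A ⊗ σ) ∘ (ψ ⊗ V) ∘ (V ⊗ ψ)`. -/
def Twisted (A V : C) (mu : A ⊗ A ⟶ A) (psi : V ⊗ A ⟶ A ⊗ V)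
    (sig : V ⊗ V ⟶ A ⊗ V) : Prop :=
  (sig ▷ A) ≫ phi A mu psi =
    (α_ V V A).hom ≫ (V ◁ psi) ≫ (α_ V A V).inv ≫ (psi ▷ V) ≫ phi A mu sig

/-- The cocycle condition
`(μ_A ⊗ V) ∘ (A ⊗ σ) ∘ (σ ⊗ V) = (μ_A ⊗ V) ∘ (A ⊗ σ) ∘ (ψ ⊗ V) ∘ (V ⊗ σ)`. -/
def Cocycle (A V : C) (mu : A ⊗ A ⟶ A) (psi : V ⊗ A ⟶ A ⊗ V)
    (sig : V ⊗ V ⟶ A ⊗ V) : Prop :=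
  (sig ▷ V) ≫ phi A mu sig =
    (α_ V V V).hom ≫ (V ◁ sig) ≫ (α_ V A V).inv ≫ (psi ▷ V) ≫ phi A mu sig

/-- The weak crossed product multiplication
`μ_{A⊗V} = (μ_A ⊗ V) ∘ (μ_A ⊗ σ) ∘ (A ⊗ ψ ⊗ V)`. -/
def prodAV (A V : C) (mu : A ⊗ A ⟶ A) (psi : V ⊗ A ⟶ A ⊗ V)
    (sig : V ⊗ V ⟶ A ⊗ V) : (A ⊗ V) ⊗ (A ⊗ V) ⟶ A ⊗ V :=
  (α_ A V (A ⊗ V)).hom ≫ (A ◁ ((α_ V A V).inv ≫ (psi ▷ V) ≫ (α_ A V V).hom)) ≫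
    (α_ A A (V ⊗ V)).inv ≫ (mu ⊗ₘ sig) ≫ (α_ A A V).inv ≫ (mu ▷ V)

/-- The morphism `η_A ⊗ V : V ⟶ A ⊗ V`. -/
def etaT (A V : C) (eta : 𝟙_ C ⟶ A) : V ⟶ A ⊗ V := (λ_ V).inv ≫ (eta ▷ V)

/-- The morphism `β_ν = (μ_A ⊗ V) ∘ (A ⊗ ν) : A ⟶ A ⊗ V`. -/
def beta (A V : C) (mu : A ⊗ A ⟶ A) (nu : 𝟙_ C ⟶ A ⊗ V) : A ⟶ A ⊗ V :=
  (ρ_ A).inv ≫ (A ◁ nu) ≫ (α_ A A V).inv ≫ (mu ▷ V)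

/-- Preunit condition (pre1):
`(μ_A ⊗ V) ∘ (A ⊗ σ) ∘ (ψ ⊗ V) ∘ (V ⊗ ν) = ∇_{A⊗V} ∘ (η_A ⊗ V)`. -/
def Pre1 (A V : C) (eta : 𝟙_ C ⟶ A) (mu : A ⊗ A ⟶ A) (psi : V ⊗ A ⟶ A ⊗ V)
    (sig : V ⊗ V ⟶ A ⊗ V) (nu : 𝟙_ C ⟶ A ⊗ V) : Prop :=
  (ρ_ V).inv ≫ (V ◁ nu) ≫ (α_ V A V).inv ≫ (psi ▷ V) ≫ phi A mu sig =
    etaT A V eta ≫ nabla A V eta mu psi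

/-- Preunit condition (pre2):
`(μ_A ⊗ V) ∘ (A ⊗ σ) ∘ (ν ⊗ V) = ∇_{A⊗V} ∘ (η_A ⊗ V)`. -/
def Pre2 (A V : C) (eta : 𝟙_ C ⟶ A) (mu : A ⊗ A ⟶ A) (psi : V ⊗ A ⟶ A ⊗ V)
    (sig : V ⊗ V ⟶ A ⊗ V) (nu : 𝟙_ C ⟶ A ⊗ V) : Prop :=
  (λ_ V).inv ≫ (nu ▷ V) ≫ phi A mu sig = etaT A V eta ≫ nabla A V eta mu psi

/-- Preunit condition (pre3): `(μ_A ⊗ V) ∘ (A ⊗ ψ) ∘ (ν ⊗ A) = β_ν`. -/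
def Pre3 (A V : C) (mu : A ⊗ A ⟶ A) (psi : V ⊗ A ⟶ A ⊗ V)
    (nu : 𝟙_ C ⟶ A ⊗ V) : Prop :=
  (λ_ A).inv ≫ (nu ▷ A) ≫ phi A mu psi = beta A V mu nu

/-- `(A ⊗ V, μ_{A⊗V})` is a weak crossed product: measuring, twisted and cocycle
conditions hold and `∇_{A⊗V} ∘ σ = σ`. -/
def WCP (A V : C) (eta : 𝟙_ C ⟶ A) (mu : A ⊗ A ⟶ A) (psi : V ⊗ A ⟶ A ⊗ V)
    (sig : V ⊗ V ⟶ A ⊗ V) : Prop :=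
  Measuring A V mu psi ∧ Twisted A V mu psi sig ∧ Cocycle A V mu psi sig ∧
    sig ≫ nabla A V eta mu psi = sig

/-- `(A ⊗ V, μ_{A⊗V})` is a weak crossed product with preunit `ν`. -/
def WCPpre (A V : C) (eta : 𝟙_ C ⟶ A) (mu : A ⊗ A ⟶ A) (psi : V ⊗ A ⟶ A ⊗ V)
    (sig : V ⊗ V ⟶ A ⊗ V) (nu : 𝟙_ C ⟶ A ⊗ V) : Prop :=
  WCP A V eta mu psi sig ∧ Pre1 A V eta mu psi sig nu ∧
    Pre2 A V eta mu psi sig nu ∧ Pre3 A V mu psi nu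

/-- `(μ_A ⊗ Y) ∘ (A ⊗ γ) : A ⊗ X ⟶ A ⊗ Y` for `γ : X ⟶ A ⊗ Y`. -/
def tmap (A : C) {X Y : C} (mu : A ⊗ A ⟶ A) (g : X ⟶ A ⊗ Y) : A ⊗ X ⟶ A ⊗ Y :=
  (A ◁ g) ≫ (α_ A A Y).inv ≫ (mu ▷ Y)

/-- Left `A`-linearity of `T : A ⊗ X ⟶ A ⊗ Y`:
`T ∘ (μ_A ⊗ X) = (μ_A ⊗ Y) ∘ (A ⊗ T)`. -/
def LeftLin (A : C) {X Y : C} (mu : A ⊗ A ⟶ A) (T : A ⊗ X ⟶ A ⊗ Y) : Prop :=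
  (mu ▷ X) ≫ T = (α_ A A X).hom ≫ (A ◁ T) ≫ (α_ A A Y).inv ≫ (mu ▷ Y)

/-- `ν` is a preunit for the associative product `m` on `X`. -/
def IsPreunit {X : C} (m : X ⊗ X ⟶ X) (nu : 𝟙_ C ⟶ X) : Prop :=
  (ρ_ X).inv ≫ (X ◁ nu) ≫ m = (λ_ X).inv ≫ (nu ▷ X) ≫ m ∧
  (ρ_ X).inv ≫ (X ◁ nu) ≫ m =
    (ρ_ X).inv ≫ (X ◁ ((λ_ (𝟙_ C)).inv ≫ (nu ⊗ₘ nu) ≫ m)) ≫ m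

/-- Brzeziński normalization conditions: `ψ ∘ (η_V ⊗ A) = A ⊗ η_V`,
`ψ ∘ (V ⊗ η_A) = η_A ⊗ V`, `σ ∘ (η_V ⊗ V) = σ ∘ (V ⊗ η_V) = η_A ⊗ V`. -/
def BrzNorm (A V : C) (eta : 𝟙_ C ⟶ A) (etaV : 𝟙_ C ⟶ V) (psi : V ⊗ A ⟶ A ⊗ V)
    (sig : V ⊗ V ⟶ A ⊗ V) : Prop :=
  (λ_ A).inv ≫ (etaV ▷ A) ≫ psi = (ρ_ A).inv ≫ (A ◁ etaV) ∧
  (ρ_ V).inv ≫ (V ◁ eta) ≫ psi = (λ_ V).inv ≫ (eta ▷ V) ∧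
  (λ_ V).inv ≫ (etaV ▷ V) ≫ sig = (λ_ V).inv ≫ (eta ▷ V) ∧
  (ρ_ V).inv ≫ (V ◁ etaV) ≫ sig = (λ_ V).inv ≫ (eta ▷ V)


lemma tmap_comp' (A : C) {X Y Z : C} (mu : A ⊗ A ⟶ A)
    (hassoc : (mu ▷ A) ≫ mu = (α_ A A A).hom ≫ (A ◁ mu) ≫ mu)
    (g : X ⟶ A ⊗ Y) (g' : Y ⟶ A ⊗ Z) :
    tmap A mu g ≫ tmap A mu g' = tmap A mu (g ≫ tmap A mu g') := by
  simp only [tmap, MonoidalCategory.whiskerLeft_comp, Category.assoc]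
  rw [← whisker_exchange_assoc]
  rw [associator_inv_naturality_left_assoc, ← comp_whiskerRight, hassoc]
  simp only [comp_whiskerRight, Category.assoc, whisker_assoc]
  coherence

lemma nabla_eq_tmap (A V : C) (eta : 𝟙_ C ⟶ A) (mu : A ⊗ A ⟶ A) (psi : V ⊗ A ⟶ A ⊗ V) :
    nabla A V eta mu psi = tmap A mu ((ρ_ V).inv ≫ (V ◁ eta) ≫ psi) := by
  simp only [nabla, tmap, phi, MonoidalCategory.whiskerLeft_comp, Category.assoc]
  simp only [← Category.assoc]; congr 2; coherence

lemma psi_nabla (A V : C) (eta : 𝟙_ C ⟶ A) (mu : A ⊗ A ⟶ A)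
    (hunit : (A ◁ eta) ≫ mu = (ρ_ A).hom)
    (psi : V ⊗ A ⟶ A ⊗ V) (hpsi : Measuring A V mu psi) :
    psi ≫ nabla A V eta mu psi = psi := by
  have h1 : psi ≫ nabla A V eta mu psi =
      (ρ_ (V ⊗ A)).inv ≫ ((V ⊗ A) ◁ eta) ≫ (psi ▷ A) ≫ phi A mu psi := by
    rw [nabla, rightUnitor_inv_naturality_assoc, ← whisker_exchange_assoc]
  rw [h1, hpsi]
  have h2 : (ρ_ (V ⊗ A)).inv ≫ ((V ⊗ A) ◁ eta) ≫ (α_ V A A).hom ≫ (V ◁ mu) ≫ psi =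
      (V ◁ ((ρ_ A).inv ≫ (A ◁ eta) ≫ mu)) ≫ psi := by
    simp only [MonoidalCategory.whiskerLeft_comp, Category.assoc]
    simp only [← Category.assoc]; congr 2; coherence
  rw [h2, hunit]
  simp

/-- the morphism `∇_{A⊗V}` is idempotent. -/
theorem nabla_idempotent (A V : C) (eta : 𝟙_ C ⟶ A) (mu : A ⊗ A ⟶ A)
    (hA : IsMon A eta mu) (psi : V ⊗ A ⟶ A ⊗ V) (hpsi : Measuring A V mu psi) :
    nabla A V eta mu psi ≫ nabla A V eta mu psi = nabla A V eta mu psi := by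
  rw [nabla_eq_tmap, tmap_comp' A mu hA.2.2]
  have hp : psi ≫ tmap A mu ((ρ_ V).inv ≫ (V ◁ eta) ≫ psi) = psi := by
    rw [← nabla_eq_tmap]; exact psi_nabla A V eta mu hA.2.1 psi hpsi
  rw [Category.assoc, Category.assoc, hp]

end WeakCrossed
end

section
/- Let A be a monoid in C, V an object of C, and ψ:V⊗A→A⊗V a morphism satisfying the measuring condition. Then the following identities hold: (μ_A⊗V)∘(A⊗ψ)∘(∇_{A⊗V}⊗A)=(μ_A⊗V)∘(A⊗ψ) and (μ_A⊗V)∘(A⊗ψ)=∇_{A⊗V}∘(μ_A⊗V)∘(A⊗ψ). -/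
open CategoryTheory MonoidalCategory

universe v u

namespace WeakCrossed

variable {C : Type u} [Category.{v} C] [MonoidalCategory C]

/-- Auxiliary: `(φ ▷ A) ≫ φ` rewritten using associativity of `μ`. -/
lemma phi_phi_aux (A V : C) (mu : A ⊗ A ⟶ A) (psi : V ⊗ A ⟶ A ⊗ V)
    (hassoc : (mu ▷ A) ≫ mu = (α_ A A A).hom ≫ (A ◁ mu) ≫ mu) :
    (phi A mu psi ▷ A) ≫ phi A mu psi =
      ((α_ A V A).hom ▷ A) ≫ (α_ A (V ⊗ A) A).hom ≫
        (A ◁ ((psi ▷ A) ≫ phi A mu psi)) ≫ (α_ A A V).inv ≫ (mu ▷ V) := by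
  simp only [phi, comp_whiskerRight, MonoidalCategory.whiskerLeft_comp, Category.assoc]
  slice_lhs 4 5 => rw [associator_naturality_left]
  slice_lhs 5 6 => rw [← whisker_exchange]
  slice_lhs 6 7 => rw [associator_inv_naturality_left]
  slice_lhs 7 8 => rw [← comp_whiskerRight, hassoc, comp_whiskerRight, comp_whiskerRight]
  monoidal

/-- `(μ_A⊗V)∘(A⊗ψ)∘(∇_{A⊗V}⊗A) = (μ_A⊗V)∘(A⊗ψ) = ∇_{A⊗V}∘(μ_A⊗V)∘(A⊗ψ)`. -/
theorem phi_nabla (A V : C) (eta : 𝟙_ C ⟶ A) (mu : A ⊗ A ⟶ A)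
    (hA : IsMon A eta mu) (psi : V ⊗ A ⟶ A ⊗ V) (hpsi : Measuring A V mu psi) :
    (nabla A V eta mu psi ▷ A) ≫ phi A mu psi = phi A mu psi ∧
      phi A mu psi = phi A mu psi ≫ nabla A V eta mu psi := by
  obtain ⟨hl, hr, hassoc⟩ := hA
  have hm : (psi ▷ A) ≫ phi A mu psi = (α_ V A A).hom ≫ (V ◁ mu) ≫ psi := hpsi
  constructor
  · rw [nabla, comp_whiskerRight, comp_whiskerRight, Category.assoc, Category.assoc,
      phi_phi_aux A V mu psi hassoc, hm]
    have key : (ρ_ (A ⊗ V)).inv ▷ A ≫ ((A ⊗ V) ◁ eta) ▷ A ≫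
        ((α_ A V A).hom ▷ A ≫ (α_ A (V ⊗ A) A).hom ≫
          (A ◁ ((α_ V A A).hom ≫ (V ◁ mu) ≫ psi)) ≫ (α_ A A V).inv ≫ (mu ▷ V)) =
        (α_ A V A).hom ≫ (A ◁ (V ◁ ((λ_ A).inv ≫ (eta ▷ A) ≫ mu))) ≫
          (A ◁ psi) ≫ (α_ A A V).inv ≫ (mu ▷ V) := by
      simp only [comp_whiskerRight, MonoidalCategory.whiskerLeft_comp, Category.assoc]
      monoidal
    rw [key, hl]
    simp [phi]
  · have step : phi A mu psi ≫ nabla A V eta mu psi =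
        (ρ_ ((A ⊗ V) ⊗ A)).inv ≫ (((A ⊗ V) ⊗ A) ◁ eta) ≫
          (phi A mu psi ▷ A) ≫ phi A mu psi := by
      rw [nabla]
      slice_lhs 1 2 => rw [rightUnitor_inv_naturality]
      slice_lhs 2 3 => rw [← whisker_exchange]
      simp
    rw [step, phi_phi_aux A V mu psi hassoc, hm]
    have key : (ρ_ ((A ⊗ V) ⊗ A)).inv ≫ (((A ⊗ V) ⊗ A) ◁ eta) ≫
        ((α_ A V A).hom ▷ A ≫ (α_ A (V ⊗ A) A).hom ≫
          (A ◁ ((α_ V A A).hom ≫ (V ◁ mu) ≫ psi)) ≫ (α_ A A V).inv ≫ (mu ▷ V)) =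
        (α_ A V A).hom ≫ (A ◁ (V ◁ ((ρ_ A).inv ≫ (A ◁ eta) ≫ mu))) ≫
          (A ◁ psi) ≫ (α_ A A V).inv ≫ (mu ▷ V) := by
      simp only [comp_whiskerRight, MonoidalCategory.whiskerLeft_comp, Category.assoc]
      monoidal
    rw [key, hr]
    simp [phi]

end WeakCrossed
end

section
/- Let A be a monoid, V an object, and suppose there exist morphisms ψ:V⊗A→A⊗V, σ:V⊗V→A⊗V and ν:K→A⊗V such that ψ satisfies the measuring condition, the quadruple (A,V,ψ,σ) satisfies the twisted and cocycle conditions and ∇_{A⊗V}∘σ=σ, and the following hold: (μ_A⊗V)∘(A⊗σ)∘(ψ⊗V)∘(V⊗ν)=∇_{A⊗V}∘(η_A⊗V), (μ_A⊗V)∘(A⊗σ)∘(ν⊗V)=∇_{A⊗V}∘(η_A⊗V), and (μ_A⊗V)∘(A⊗ψ)∘(ν⊗A)=β_ν where β_ν=(μ_A⊗V)∘(A⊗ν). Then the product μ_{A⊗V}=(μ_A⊗V)∘(μ_A⊗σ)∘(A⊗ψ⊗V) is associative with preunit ν, is normalized with respect to the idempotent ∇_{A⊗V}^ν=μ_{A⊗V}∘(A⊗V⊗ν),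 and ∇_{A⊗V}=∇_{A⊗V}^ν. -/
open CategoryTheory MonoidalCategory

universe v u

namespace WeakCrossed

variable {C : Type u} [Category.{v} C] [MonoidalCategory C]

section Aux
variable {A V : C} {eta : 𝟙_ C ⟶ A} {mu : A ⊗ A ⟶ A}

lemma tmap_comp {X' X Y : C} (u : X' ⟶ X) (h : X ⟶ A ⊗ Y) :
    tmap A mu (u ≫ h) = (A ◁ u) ≫ tmap A mu h := by
  simp [tmap]

lemma tmap_whiskerLeft {X Y Y' : C} (h : X ⟶ A ⊗ Y) (v : Y ⟶ Y') :
    tmap A mu (h ≫ (A ◁ v)) = tmap A mu h ≫ (A ◁ v) := by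
  simp only [tmap, MonoidalCategory.whiskerLeft_comp, Category.assoc]
  rw [associator_inv_naturality_right_assoc, whisker_exchange]

lemma mu_tmap (hA : IsMon A eta mu) {X Z : C} (k : X ⟶ A ⊗ Z) :
    (α_ A A X).inv ≫ (mu ▷ X) ≫ tmap A mu k =
      (A ◁ tmap A mu k) ≫ (α_ A A Z).inv ≫ (mu ▷ Z) := by
  simp only [tmap]
  rw [← whisker_exchange_assoc, associator_inv_naturality_left_assoc,
    ← comp_whiskerRight, hA.2.2]
  simp only [MonoidalCategory.whiskerLeft_comp, comp_whiskerRight, Category.assoc]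
  rw [associator_inv_naturality_middle_assoc]
  monoidal

end Aux

section Aux2
variable {A V : C} {eta : 𝟙_ C ⟶ A} {mu : A ⊗ A ⟶ A}

lemma tmap_tmap (hA : IsMon A eta mu) {X Y Z : C} (h : X ⟶ A ⊗ Y) (k : Y ⟶ A ⊗ Z) :
    tmap A mu (h ≫ tmap A mu k) = tmap A mu h ≫ tmap A mu k := by
  conv_lhs => rw [tmap]
  rw [MonoidalCategory.whiskerLeft_comp, Category.assoc, ← mu_tmap hA k]
  simp [tmap]

lemma eta_tmap (hA : IsMon A eta mu) {X Y : C} (h : X ⟶ A ⊗ Y) :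
    (λ_ X).inv ≫ (eta ▷ X) ≫ tmap A mu h = h := by
  simp only [tmap]
  rw [← whisker_exchange_assoc, associator_inv_naturality_left_assoc,
    ← comp_whiskerRight, hA.1]
  monoidal

lemma tmap_etaT (hA : IsMon A eta mu) {Y : C} :
    tmap A mu ((λ_ Y).inv ≫ (eta ▷ Y)) = 𝟙 (A ⊗ Y) := by
  simp only [tmap, MonoidalCategory.whiskerLeft_comp, Category.assoc]
  rw [associator_inv_naturality_middle_assoc, ← comp_whiskerRight, hA.2.1]
  monoidal

lemma tmap_whiskerRight_tmap (hA : IsMon A eta mu) {X Y W Z : C}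
    (f : X ⟶ A ⊗ Y) (k : Y ⊗ W ⟶ A ⊗ Z) :
    (tmap A mu f ▷ W) ≫ (α_ A Y W).hom ≫ tmap A mu k =
    (α_ A X W).hom ≫ tmap A mu ((f ▷ W) ≫ (α_ A Y W).hom ≫ tmap A mu k) := by
  have hm : (mu ▷ (Y ⊗ W)) ≫ tmap A mu k =
      (α_ A A (Y ⊗ W)).hom ≫ (A ◁ tmap A mu k) ≫ (α_ A A Z).inv ≫ (mu ▷ Z) := by
    rw [← mu_tmap hA k]; simp
  conv_lhs => rw [tmap]
  simp only [comp_whiskerRight, Category.assoc]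
  rw [whiskerRight_tensor_symm_assoc mu Y W]
  simp only [Iso.inv_hom_id_assoc]
  rw [hm]
  conv_rhs => rw [tmap]
  simp only [tmap, MonoidalCategory.whiskerLeft_comp, Category.assoc]
  monoidal

end Aux2

/-- `g = (μ_A⊗V)(A⊗σ)(ψ⊗V) : V⊗(A⊗V) ⟶ A⊗V`. -/
def gmap {A V : C} (mu : A ⊗ A ⟶ A) (psi : V ⊗ A ⟶ A ⊗ V) (sig : V ⊗ V ⟶ A ⊗ V) :
    V ⊗ (A ⊗ V) ⟶ A ⊗ V :=
  (α_ V A V).inv ≫ (psi ▷ V) ≫ (α_ A V V).hom ≫ tmap A mu sig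

/-- `w = ψ∘(V⊗η) : V ⟶ A⊗V`. -/
def wmap {A : C} (V : C) (eta : 𝟙_ C ⟶ A) (psi : V ⊗ A ⟶ A ⊗ V) : V ⟶ A ⊗ V :=
  (ρ_ V).inv ≫ (V ◁ eta) ≫ psi

section Aux3
variable {A V : C} {eta : 𝟙_ C ⟶ A} {mu : A ⊗ A ⟶ A}
  {psi : V ⊗ A ⟶ A ⊗ V} {sig : V ⊗ V ⟶ A ⊗ V}

lemma phi_eq {X Z Y : C} (f : X ⊗ Z ⟶ A ⊗ Y) :
    phi A mu f = (α_ A X Z).hom ≫ tmap A mu f := by simp [phi, tmap]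

lemma nabla_eq : nabla A V eta mu psi = tmap A mu (wmap V eta psi) := by
  simp only [nabla, phi, tmap, wmap, MonoidalCategory.whiskerLeft_comp, Category.assoc]
  monoidal

lemma psi_gmap : (psi ▷ V) ≫ (α_ A V V).hom ≫ tmap A mu sig =
    (α_ V A V).hom ≫ gmap mu psi sig := by simp [gmap]

lemma prodAV_eq (hA : IsMon A eta mu) :
    prodAV A V mu psi sig = (α_ A V (A ⊗ V)).hom ≫ tmap A mu (gmap mu psi sig) := by
  simp only [prodAV, MonoidalCategory.tensorHom_def, Category.assoc]
  rw [show (A ◁ sig) ≫ (α_ A A V).inv ≫ (mu ▷ V) = tmap A mu sig from rfl]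
  rw [mu_tmap hA sig]
  simp only [gmap, tmap, MonoidalCategory.whiskerLeft_comp, Category.assoc]

lemma meas' (hpsi : Measuring A V mu psi) :
    (V ◁ mu) ≫ psi =
      (α_ V A A).inv ≫ (psi ▷ A) ≫ (α_ A V A).hom ≫ tmap A mu psi := by
  rw [← phi_eq, hpsi]; simp

lemma tw' (htw : Twisted A V mu psi sig) :
    (sig ▷ A) ≫ (α_ A V A).hom ≫ tmap A mu psi =
      (α_ V V A).hom ≫ (V ◁ psi) ≫ gmap mu psi sig := by
  have h1 : (sig ▷ A) ≫ phi A mu psi =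
      (α_ V V A).hom ≫ (V ◁ psi) ≫ (α_ V A V).inv ≫ (psi ▷ V) ≫ phi A mu sig := htw
  rw [← phi_eq, h1, phi_eq]; simp [gmap]

lemma co' (hco : Cocycle A V mu psi sig) :
    (sig ▷ V) ≫ (α_ A V V).hom ≫ tmap A mu sig =
      (α_ V V V).hom ≫ (V ◁ sig) ≫ gmap mu psi sig := by
  have h1 : (sig ▷ V) ≫ phi A mu sig =
      (α_ V V V).hom ≫ (V ◁ sig) ≫ (α_ V A V).inv ≫ (psi ▷ V) ≫ phi A mu sig := hco
  rw [← phi_eq, h1, phi_eq]; simp [gmap]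

lemma mu_gmap (hA : IsMon A eta mu) (hpsi : Measuring A V mu psi) :
    (V ◁ ((α_ A A V).inv ≫ (mu ▷ V))) ≫ gmap mu psi sig =
      (α_ V A (A ⊗ V)).inv ≫ (psi ▷ (A ⊗ V)) ≫ (α_ A V (A ⊗ V)).hom ≫
        tmap A mu (gmap mu psi sig) := by
  conv_lhs => rw [gmap]
  simp only [MonoidalCategory.whiskerLeft_comp, Category.assoc]
  rw [associator_inv_naturality_middle_assoc, ← comp_whiskerRight_assoc, meas' hpsi]
  simp only [comp_whiskerRight, Category.assoc]
  rw [tmap_whiskerRight_tmap hA psi sig, psi_gmap, tmap_comp]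
  monoidal

/-- key lemma: `g∘(V⊗t_h) = t_g∘(ψ⊗(A⊗V))∘((V⊗A)⊗h)`. -/
lemma gmap_tmap (hA : IsMon A eta mu) (hpsi : Measuring A V mu psi)
    {X : C} (h : X ⟶ A ⊗ V) :
    (V ◁ tmap A mu h) ≫ gmap mu psi sig =
      (α_ V A X).inv ≫ ((V ⊗ A) ◁ h) ≫ (psi ▷ (A ⊗ V)) ≫ (α_ A V (A ⊗ V)).hom ≫
        tmap A mu (gmap mu psi sig) := by
  have : (V ◁ tmap A mu h) ≫ gmap mu psi sig =
      (V ◁ (A ◁ h)) ≫ (V ◁ ((α_ A A V).inv ≫ (mu ▷ V))) ≫ gmap mu psi sig := by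
    simp [tmap]
  rw [this, mu_gmap hA hpsi, associator_inv_naturality_right_assoc]

end Aux3

/-- `u' = (ψ⊗V) reassociated : V⊗(A⊗V) ⟶ A⊗(V⊗V)`. -/
def umap {A V : C} (psi : V ⊗ A ⟶ A ⊗ V) : V ⊗ (A ⊗ V) ⟶ A ⊗ (V ⊗ V) :=
  (α_ V A V).inv ≫ (psi ▷ V) ≫ (α_ A V V).hom

section Aux4
variable {A V : C} {eta : 𝟙_ C ⟶ A} {mu : A ⊗ A ⟶ A}
  {psi : V ⊗ A ⟶ A ⊗ V} {sig : V ⊗ V ⟶ A ⊗ V}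

lemma gmap_def : gmap mu psi sig = umap psi ≫ tmap A mu sig := by
  simp [gmap, umap]

lemma tmap_gmap_split (hA : IsMon A eta mu) :
    tmap A mu (gmap mu psi sig) = tmap A mu (umap psi) ≫ tmap A mu sig := by
  rw [gmap_def, tmap_tmap hA]

lemma S2 (hA : IsMon A eta mu) (htw : Twisted A V mu psi sig)
    (hco : Cocycle A V mu psi sig) :
    (sig ▷ (A ⊗ V)) ≫ (α_ A V (A ⊗ V)).hom ≫ tmap A mu (gmap mu psi sig) =
      (α_ V V (A ⊗ V)).hom ≫ (V ◁ umap psi) ≫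
        (α_ V A (V ⊗ V)).inv ≫ (psi ▷ (V ⊗ V)) ≫ (α_ A V (V ⊗ V)).hom ≫
        (A ◁ (V ◁ sig)) ≫ tmap A mu (gmap mu psi sig) := by
  have S2a : (sig ▷ (A ⊗ V)) ≫ (α_ A V (A ⊗ V)).hom ≫ tmap A mu (umap psi) =
      (α_ (V ⊗ V) A V).inv ≫
        (((sig ▷ A) ≫ (α_ A V A).hom ≫ tmap A mu psi) ▷ V) ≫ (α_ A V V).hom := by
    simp only [tmap, umap, MonoidalCategory.whiskerLeft_comp, comp_whiskerRight,
      Category.assoc]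
    monoidal
  calc (sig ▷ (A ⊗ V)) ≫ (α_ A V (A ⊗ V)).hom ≫ tmap A mu (gmap mu psi sig)
      = ((sig ▷ (A ⊗ V)) ≫ (α_ A V (A ⊗ V)).hom ≫ tmap A mu (umap psi)) ≫
          tmap A mu sig := by
        rw [tmap_gmap_split hA]; simp only [Category.assoc]
    _ = (α_ (V ⊗ V) A V).inv ≫
          (((α_ V V A).hom ≫ (V ◁ psi) ≫ gmap mu psi sig) ▷ V) ≫
          (α_ A V V).hom ≫ tmap A mu sig := by
        rw [S2a, tw' htw]; simp only [Category.assoc]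
    _ = (α_ (V ⊗ V) A V).inv ≫ ((α_ V V A).hom ▷ V) ≫ ((V ◁ psi) ▷ V) ≫
          (umap psi ▷ V) ≫ (tmap A mu sig ▷ V) ≫ (α_ A V V).hom ≫
          tmap A mu sig := by
        rw [gmap_def]; simp only [comp_whiskerRight, Category.assoc]
    _ = (α_ (V ⊗ V) A V).inv ≫ ((α_ V V A).hom ▷ V) ≫ ((V ◁ psi) ▷ V) ≫
          (umap psi ▷ V) ≫ (α_ A (V ⊗ V) V).hom ≫
          tmap A mu ((sig ▷ V) ≫ (α_ A V V).hom ≫ tmap A mu sig) := by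
        rw [tmap_whiskerRight_tmap hA sig sig]
    _ = (α_ (V ⊗ V) A V).inv ≫ ((α_ V V A).hom ▷ V) ≫ ((V ◁ psi) ▷ V) ≫
          (umap psi ▷ V) ≫ (α_ A (V ⊗ V) V).hom ≫
          (A ◁ ((α_ V V V).hom ≫ (V ◁ sig))) ≫ tmap A mu (gmap mu psi sig) := by
        rw [co' hco]
        rw [show (α_ V V V).hom ≫ (V ◁ sig) ≫ gmap mu psi sig =
          ((α_ V V V).hom ≫ (V ◁ sig)) ≫ gmap mu psi sig by simp]
        rw [tmap_comp]
    _ = (α_ V V (A ⊗ V)).hom ≫ (V ◁ umap psi) ≫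
        (α_ V A (V ⊗ V)).inv ≫ (psi ▷ (V ⊗ V)) ≫ (α_ A V (V ⊗ V)).hom ≫
        (A ◁ (V ◁ sig)) ≫ tmap A mu (gmap mu psi sig) := by
        simp only [umap, comp_whiskerRight, MonoidalCategory.whiskerLeft_comp,
          Category.assoc]
        monoidal

end Aux4

section Aux5
variable {A V : C} {eta : 𝟙_ C ⟶ A} {mu : A ⊗ A ⟶ A}
  {psi : V ⊗ A ⟶ A ⊗ V} {sig : V ⊗ V ⟶ A ⊗ V}

lemma star (hA : IsMon A eta mu) (hpsi : Measuring A V mu psi)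
    (htw : Twisted A V mu psi sig) (hco : Cocycle A V mu psi sig) :
    (V ◁ tmap A mu (gmap mu psi sig)) ≫ gmap mu psi sig =
      (V ◁ (α_ A V (A ⊗ V)).inv) ≫ (α_ V (A ⊗ V) (A ⊗ V)).inv ≫
        (gmap mu psi sig ▷ (A ⊗ V)) ≫ (α_ A V (A ⊗ V)).hom ≫
        tmap A mu (gmap mu psi sig) := by
  have utotEq : tmap A mu ((α_ V A (V ⊗ V)).inv ≫ ((V ⊗ A) ◁ sig) ≫
        (psi ▷ (A ⊗ V)) ≫ (α_ A V (A ⊗ V)).hom) =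
      tmap A mu ((α_ V A (V ⊗ V)).inv ≫ (psi ▷ (V ⊗ V)) ≫ ((A ⊗ V) ◁ sig) ≫
        (α_ A V (A ⊗ V)).hom) := by
    rw [whisker_exchange_assoc]
  -- LHS chase
  have hL : (V ◁ tmap A mu (gmap mu psi sig)) ≫ gmap mu psi sig =
      (α_ V A (V ⊗ (A ⊗ V))).inv ≫ (psi ▷ (V ⊗ (A ⊗ V))) ≫
        ((A ⊗ V) ◁ umap psi) ≫ (α_ A V (A ⊗ (V ⊗ V))).hom ≫
        tmap A mu ((α_ V A (V ⊗ V)).inv ≫ (psi ▷ (V ⊗ V)) ≫ ((A ⊗ V) ◁ sig) ≫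
          (α_ A V (A ⊗ V)).hom) ≫ tmap A mu (gmap mu psi sig) := by
    rw [gmap_tmap hA hpsi (gmap mu psi sig)]
    rw [show (V ⊗ A) ◁ gmap mu psi sig =
        ((V ⊗ A) ◁ umap psi) ≫ ((V ⊗ A) ◁ tmap A mu sig) by
      rw [gmap_def, MonoidalCategory.whiskerLeft_comp]]
    rw [Category.assoc, whisker_exchange_assoc,
      associator_naturality_right_assoc, ← tmap_comp, gmap_tmap hA hpsi sig]
    rw [show (α_ V A (V ⊗ V)).inv ≫ ((V ⊗ A) ◁ sig) ≫ (psi ▷ (A ⊗ V)) ≫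
          (α_ A V (A ⊗ V)).hom ≫ tmap A mu (gmap mu psi sig) =
        ((α_ V A (V ⊗ V)).inv ≫ ((V ⊗ A) ◁ sig) ≫ (psi ▷ (A ⊗ V)) ≫
          (α_ A V (A ⊗ V)).hom) ≫ tmap A mu (gmap mu psi sig) by
      simp only [Category.assoc]]
    rw [tmap_tmap hA, utotEq, ← whisker_exchange_assoc psi (umap psi)]
  -- RHS chase
  have hR : (V ◁ (α_ A V (A ⊗ V)).inv) ≫ (α_ V (A ⊗ V) (A ⊗ V)).inv ≫
        (gmap mu psi sig ▷ (A ⊗ V)) ≫ (α_ A V (A ⊗ V)).hom ≫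
        tmap A mu (gmap mu psi sig) =
      (V ◁ (α_ A V (A ⊗ V)).inv) ≫ (α_ V (A ⊗ V) (A ⊗ V)).inv ≫
        (umap psi ▷ (A ⊗ V)) ≫ (α_ A (V ⊗ V) (A ⊗ V)).hom ≫
        tmap A mu ((α_ V V (A ⊗ V)).hom ≫ (V ◁ umap psi) ≫
          (α_ V A (V ⊗ V)).inv ≫ (psi ▷ (V ⊗ V)) ≫ (α_ A V (V ⊗ V)).hom ≫
          (A ◁ (V ◁ sig))) ≫ tmap A mu (gmap mu psi sig) := by
    rw [show gmap mu psi sig ▷ (A ⊗ V) =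
        (umap psi ▷ (A ⊗ V)) ≫ (tmap A mu sig ▷ (A ⊗ V)) by
      rw [gmap_def, comp_whiskerRight]]
    rw [Category.assoc, tmap_whiskerRight_tmap hA sig
      (gmap mu psi sig), S2 hA htw hco]
    rw [show (α_ V V (A ⊗ V)).hom ≫ (V ◁ umap psi) ≫
          (α_ V A (V ⊗ V)).inv ≫ (psi ▷ (V ⊗ V)) ≫ (α_ A V (V ⊗ V)).hom ≫
          (A ◁ (V ◁ sig)) ≫ tmap A mu (gmap mu psi sig) =
        ((α_ V V (A ⊗ V)).hom ≫ (V ◁ umap psi) ≫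
          (α_ V A (V ⊗ V)).inv ≫ (psi ▷ (V ⊗ V)) ≫ (α_ A V (V ⊗ V)).hom ≫
          (A ◁ (V ◁ sig))) ≫ tmap A mu (gmap mu psi sig) by
      simp only [Category.assoc]]
    rw [tmap_tmap hA]
  rw [hL, hR]
  simp only [tmap, umap, MonoidalCategory.whiskerLeft_comp, comp_whiskerRight,
    Category.assoc]
  monoidal

end Aux5

section Aux6
variable {A V : C} {eta : 𝟙_ C ⟶ A} {mu : A ⊗ A ⟶ A}
  {psi : V ⊗ A ⟶ A ⊗ V} {sig : V ⊗ V ⟶ A ⊗ V}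

lemma assocMain (hA : IsMon A eta mu) (hpsi : Measuring A V mu psi)
    (htw : Twisted A V mu psi sig) (hco : Cocycle A V mu psi sig) :
    (prodAV A V mu psi sig ▷ (A ⊗ V)) ≫ prodAV A V mu psi sig =
      (α_ (A ⊗ V) (A ⊗ V) (A ⊗ V)).hom ≫
        ((A ⊗ V) ◁ prodAV A V mu psi sig) ≫ prodAV A V mu psi sig := by
  rw [prodAV_eq hA]
  rw [comp_whiskerRight, MonoidalCategory.whiskerLeft_comp, Category.assoc,
    Category.assoc, tmap_whiskerRight_tmap hA (gmap mu psi sig) (gmap mu psi sig)]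
  rw [associator_naturality_right_assoc, ← tmap_comp, star hA hpsi htw hco]
  rw [show (V ◁ (α_ A V (A ⊗ V)).inv) ≫ (α_ V (A ⊗ V) (A ⊗ V)).inv ≫
        (gmap mu psi sig ▷ (A ⊗ V)) ≫ (α_ A V (A ⊗ V)).hom ≫
        tmap A mu (gmap mu psi sig) =
      ((V ◁ (α_ A V (A ⊗ V)).inv) ≫ (α_ V (A ⊗ V) (A ⊗ V)).inv ≫
        (gmap mu psi sig ▷ (A ⊗ V)) ≫ (α_ A V (A ⊗ V)).hom) ≫
        tmap A mu (gmap mu psi sig) by simp only [Category.assoc]]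
  rw [tmap_tmap hA]
  rw [show (gmap mu psi sig ▷ (A ⊗ V)) ≫ (α_ A V (A ⊗ V)).hom ≫
        tmap A mu (gmap mu psi sig) =
      ((gmap mu psi sig ▷ (A ⊗ V)) ≫ (α_ A V (A ⊗ V)).hom) ≫
        tmap A mu (gmap mu psi sig) by simp only [Category.assoc]]
  rw [tmap_tmap hA]
  simp only [tmap, MonoidalCategory.whiskerLeft_comp, comp_whiskerRight,
    Category.assoc]
  monoidal

end Aux6

section Aux7
variable {A V : C} {eta : 𝟙_ C ⟶ A} {mu : A ⊗ A ⟶ A}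
  {psi : V ⊗ A ⟶ A ⊗ V} {sig : V ⊗ V ⟶ A ⊗ V} {nu : 𝟙_ C ⟶ A ⊗ V}

lemma etaT_nab (hA : IsMon A eta mu) :
    etaT A V eta ≫ nabla A V eta mu psi = wmap V eta psi := by
  rw [nabla_eq, etaT, Category.assoc, eta_tmap hA]

lemma P1' (hA : IsMon A eta mu) (h1 : Pre1 A V eta mu psi sig nu) :
    (ρ_ V).inv ≫ (V ◁ nu) ≫ gmap mu psi sig = wmap V eta psi := by
  have h : (ρ_ V).inv ≫ (V ◁ nu) ≫ (α_ V A V).inv ≫ (psi ▷ V) ≫ phi A mu sig =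
      etaT A V eta ≫ nabla A V eta mu psi := h1
  rw [phi_eq, etaT_nab hA] at h
  simpa [gmap] using h

lemma P2' (hA : IsMon A eta mu) (h2 : Pre2 A V eta mu psi sig nu) :
    (λ_ V).inv ≫ (nu ▷ V) ≫ (α_ A V V).hom ≫ tmap A mu sig = wmap V eta psi := by
  have h : (λ_ V).inv ≫ (nu ▷ V) ≫ phi A mu sig =
      etaT A V eta ≫ nabla A V eta mu psi := h2
  rw [phi_eq, etaT_nab hA] at h
  simpa using h

lemma P3' (h3 : Pre3 A V mu psi nu) :
    (λ_ A).inv ≫ (nu ▷ A) ≫ (α_ A V A).hom ≫ tmap A mu psi =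
      (ρ_ A).inv ≫ tmap A mu nu := by
  have h : (λ_ A).inv ≫ (nu ▷ A) ≫ phi A mu psi = beta A V mu nu := h3
  rw [phi_eq] at h
  simpa [beta, tmap] using h

lemma nabnu (hA : IsMon A eta mu) (h1 : Pre1 A V eta mu psi sig nu) :
    (ρ_ (A ⊗ V)).inv ≫ ((A ⊗ V) ◁ nu) ≫ prodAV A V mu psi sig =
      nabla A V eta mu psi := by
  rw [prodAV_eq hA, associator_naturality_right_assoc, ← tmap_comp]
  have e : (ρ_ (A ⊗ V)).inv ≫ (α_ A V (𝟙_ C)).hom = A ◁ (ρ_ V).inv := by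
    monoidal
  rw [reassoc_of% e, ← tmap_comp, P1' hA h1, ← nabla_eq]

lemma gmap_nab (hA : IsMon A eta mu)
    (hsig : sig ≫ nabla A V eta mu psi = sig) :
    gmap mu psi sig ≫ nabla A V eta mu psi = gmap mu psi sig := by
  rw [gmap_def, Category.assoc, nabla_eq, ← tmap_tmap hA, ← nabla_eq, hsig,
    ← gmap_def]

lemma prod_nab (hA : IsMon A eta mu)
    (hsig : sig ≫ nabla A V eta mu psi = sig) :
    prodAV A V mu psi sig ≫ nabla A V eta mu psi = prodAV A V mu psi sig := by
  rw [prodAV_eq hA, Category.assoc, nabla_eq, ← tmap_tmap hA, ← nabla_eq,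
    gmap_nab hA hsig]

lemma w_gmap_left (hA : IsMon A eta mu) (hpsi : Measuring A V mu psi) :
    (wmap V eta psi ▷ (A ⊗ V)) ≫ (α_ A V (A ⊗ V)).hom ≫
      tmap A mu (gmap mu psi sig) = gmap mu psi sig := by
  have h1 : (psi ▷ (A ⊗ V)) ≫ (α_ A V (A ⊗ V)).hom ≫
        tmap A mu (gmap mu psi sig) =
      (α_ V A (A ⊗ V)).hom ≫ (V ◁ ((α_ A A V).inv ≫ (mu ▷ V))) ≫
        gmap mu psi sig := by
    rw [mu_gmap hA hpsi]; simp
  rw [wmap, comp_whiskerRight, comp_whiskerRight, Category.assoc,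
    Category.assoc, h1, associator_naturality_middle_assoc,
    ← MonoidalCategory.whiskerLeft_comp_assoc]
  rw [show (eta ▷ (A ⊗ V)) ≫ (α_ A A V).inv ≫ (mu ▷ V) =
      (α_ (𝟙_ C) A V).inv ≫ (((eta ▷ A) ≫ mu) ▷ V) by
    rw [associator_inv_naturality_left_assoc, comp_whiskerRight]]
  rw [hA.1]
  monoidal

lemma Xlem (htw : Twisted A V mu psi sig)
    (hsig : sig ≫ nabla A V eta mu psi = sig) :
    (V ◁ wmap V eta psi) ≫ gmap mu psi sig = sig := by
  calc (V ◁ wmap V eta psi) ≫ gmap mu psi sig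
      = (ρ_ (V ⊗ V)).inv ≫ ((V ⊗ V) ◁ eta) ≫ (α_ V V A).hom ≫ (V ◁ psi) ≫
          gmap mu psi sig := by
        simp only [wmap, MonoidalCategory.whiskerLeft_comp, Category.assoc]
        monoidal
    _ = (ρ_ (V ⊗ V)).inv ≫ ((V ⊗ V) ◁ eta) ≫ (sig ▷ A) ≫ (α_ A V A).hom ≫
          tmap A mu psi := by rw [← tw' htw]
    _ = sig ≫ nabla A V eta mu psi := by
        rw [whisker_exchange_assoc sig eta, nabla, phi_eq]
        monoidal
    _ = sig := hsig

lemma nab_gmap (hA : IsMon A eta mu) (hpsi : Measuring A V mu psi)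
    (htw : Twisted A V mu psi sig)
    (hsig : sig ≫ nabla A V eta mu psi = sig) :
    (V ◁ nabla A V eta mu psi) ≫ gmap mu psi sig = gmap mu psi sig := by
  rw [nabla_eq, gmap_tmap hA hpsi (wmap V eta psi),
    whisker_exchange_assoc psi (wmap V eta psi),
    associator_naturality_right_assoc, ← tmap_comp, Xlem htw hsig]
  simp [gmap]

lemma nab_prod_right (hA : IsMon A eta mu) (hpsi : Measuring A V mu psi)
    (htw : Twisted A V mu psi sig)
    (hsig : sig ≫ nabla A V eta mu psi = sig) :
    ((A ⊗ V) ◁ nabla A V eta mu psi) ≫ prodAV A V mu psi sig =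
      prodAV A V mu psi sig := by
  rw [prodAV_eq hA, associator_naturality_right_assoc, ← tmap_comp,
    nab_gmap hA hpsi htw hsig]

lemma nab_prod_left (hA : IsMon A eta mu) (hpsi : Measuring A V mu psi) :
    (nabla A V eta mu psi ▷ (A ⊗ V)) ≫ prodAV A V mu psi sig =
      prodAV A V mu psi sig := by
  rw [prodAV_eq hA, nabla_eq,
    tmap_whiskerRight_tmap hA (wmap V eta psi) (gmap mu psi sig),
    w_gmap_left hA hpsi]

lemma nu_left (hA : IsMon A eta mu) (h2 : Pre2 A V eta mu psi sig nu)
    (h3 : Pre3 A V mu psi nu) :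
    (λ_ (A ⊗ V)).inv ≫ (nu ▷ (A ⊗ V)) ≫ prodAV A V mu psi sig =
      nabla A V eta mu psi := by
  have hb : (λ_ (A ⊗ V)).inv ≫ (nu ▷ (A ⊗ V)) ≫ (α_ A V (A ⊗ V)).hom ≫
        tmap A mu (umap psi) =
      (((λ_ A).inv ≫ (nu ▷ A) ≫ (α_ A V A).hom ≫ tmap A mu psi) ▷ V) ≫
        (α_ A V V).hom := by
    simp only [tmap, umap, MonoidalCategory.whiskerLeft_comp, comp_whiskerRight,
      Category.assoc]
    monoidal
  rw [prodAV_eq hA, tmap_gmap_split hA]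
  calc (λ_ (A ⊗ V)).inv ≫ (nu ▷ (A ⊗ V)) ≫ (α_ A V (A ⊗ V)).hom ≫
        tmap A mu (umap psi) ≫ tmap A mu sig
      = ((λ_ (A ⊗ V)).inv ≫ (nu ▷ (A ⊗ V)) ≫ (α_ A V (A ⊗ V)).hom ≫
          tmap A mu (umap psi)) ≫ tmap A mu sig := by simp only [Category.assoc]
    _ = (((λ_ A).inv ≫ (nu ▷ A) ≫ (α_ A V A).hom ≫ tmap A mu psi) ▷ V) ≫
          (α_ A V V).hom ≫ tmap A mu sig := by
        rw [hb]; simp only [Category.assoc]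
    _ = (((ρ_ A).inv ≫ tmap A mu nu) ▷ V) ≫ (α_ A V V).hom ≫
          tmap A mu sig := by rw [P3' h3]
    _ = ((ρ_ A).inv ▷ V) ≫ (α_ A (𝟙_ C) V).hom ≫
          tmap A mu ((nu ▷ V) ≫ (α_ A V V).hom ≫ tmap A mu sig) := by
        rw [comp_whiskerRight, Category.assoc, tmap_whiskerRight_tmap hA nu sig]
    _ = (A ◁ (λ_ V).inv) ≫
          tmap A mu ((nu ▷ V) ≫ (α_ A V V).hom ≫ tmap A mu sig) := by
        have e : ((ρ_ A).inv ▷ V) ≫ (α_ A (𝟙_ C) V).hom = A ◁ (λ_ V).inv := by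
          monoidal
        rw [reassoc_of% e]
    _ = tmap A mu ((λ_ V).inv ≫ (nu ▷ V) ≫ (α_ A V V).hom ≫ tmap A mu sig) := by
        rw [← tmap_comp]
    _ = nabla A V eta mu psi := by rw [P2' hA h2, ← nabla_eq]

end Aux7


/-- characterization, direction (ii) ⟹ (i): the weak crossed product
with the compatibility conditions gives an associative product with preunit `ν`,
normalized with respect to `∇_{A⊗V}^ν`, and `∇_{A⊗V} = ∇_{A⊗V}^ν`. -/
theorem wcp_gives_preunit (A V : C) (eta : 𝟙_ C ⟶ A) (mu : A ⊗ A ⟶ A)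
    (hA : IsMon A eta mu) (psi : V ⊗ A ⟶ A ⊗ V) (sig : V ⊗ V ⟶ A ⊗ V)
    (nu : 𝟙_ C ⟶ A ⊗ V)
    (hpsi : Measuring A V mu psi) (htw : Twisted A V mu psi sig)
    (hco : Cocycle A V mu psi sig) (hsig : sig ≫ nabla A V eta mu psi = sig)
    (h1 : Pre1 A V eta mu psi sig nu) (h2 : Pre2 A V eta mu psi sig nu)
    (h3 : Pre3 A V mu psi nu) :
    ((prodAV A V mu psi sig ▷ (A ⊗ V)) ≫ prodAV A V mu psi sig =
        (α_ (A ⊗ V) (A ⊗ V) (A ⊗ V)).hom ≫ ((A ⊗ V) ◁ prodAV A V mu psi sig) ≫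
          prodAV A V mu psi sig) ∧
    IsPreunit (prodAV A V mu psi sig) nu ∧
    (prodAV A V mu psi sig ≫
        ((ρ_ (A ⊗ V)).inv ≫ ((A ⊗ V) ◁ nu) ≫ prodAV A V mu psi sig) =
      prodAV A V mu psi sig) ∧
    ((((ρ_ (A ⊗ V)).inv ≫ ((A ⊗ V) ◁ nu) ≫ prodAV A V mu psi sig) ⊗ₘ
        ((ρ_ (A ⊗ V)).inv ≫ ((A ⊗ V) ◁ nu) ≫ prodAV A V mu psi sig)) ≫
          prodAV A V mu psi sig =
      prodAV A V mu psi sig) ∧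
    nabla A V eta mu psi =
      (ρ_ (A ⊗ V)).inv ≫ ((A ⊗ V) ◁ nu) ≫ prodAV A V mu psi sig := by
  refine ⟨assocMain hA hpsi htw hco, ⟨?_, ?_⟩, ?_, ?_, ?_⟩
  · rw [nabnu hA h1, nu_left hA h2 h3]
  · rw [nabnu hA h1, MonoidalCategory.tensorHom_def]
    simp only [Category.assoc]
    rw [show (nu ▷ (𝟙_ C)) ≫ ((A ⊗ V) ◁ nu) ≫ prodAV A V mu psi sig =
        ((𝟙_ C) ◁ nu) ≫ (nu ▷ (A ⊗ V)) ≫ prodAV A V mu psi sig from by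
      rw [← whisker_exchange_assoc nu nu]]
    rw [← leftUnitor_inv_naturality_assoc, nu_left hA h2 h3,
      MonoidalCategory.whiskerLeft_comp, Category.assoc,
      nab_prod_right hA hpsi htw hsig, nabnu hA h1]
  · rw [nabnu hA h1, prod_nab hA hsig]
  · rw [nabnu hA h1, MonoidalCategory.tensorHom_def, Category.assoc,
      nab_prod_right hA hpsi htw hsig, nab_prod_left hA hpsi]
  · rw [nabnu hA h1]

end WeakCrossed
end
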